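/- In any perfect Bayesian equilibrium (σ*, β*) of the signaling game with extended-real-valued congestion costs, the equilibrium travel costs of both servers are finite: c_H(σ^t*_h, σ^t*_l) < +∞ and c_L(σ^t*_h, σ^t*_l) < +∞. -/
import Mathlib


open Set

/-- In any PBE of the signaling game with extended-real-valued congestion costs
`c_H(sh, sl) = g_H(θ(1-sh) + (1-θ)sl)` and `c_L(sh, sl) = g_L(θ sh + (1-θ)(1-sl))`,
the equilibrium travel costs of both servers are finite. -/
theorem pbe_costs_finite (θ pth ptl pd Fh Fl : ℝ) (gH gL : ℝ → EReal)
    (hθ : θ ∈ Ioo (0:ℝ) 1) (hpth : 0 ≤ pth) (hptl : 0 < ptl)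
    (hpd : 0 < pd) (hFh : 0 ≤ Fh) (hFl : 0 ≤ Fl)
    (hgH : MonotoneOn gH (Icc 0 1)) (hgL : MonotoneOn gL (Icc 0 1))
    (hA1 : gH θ < gL (1 - θ) ∧ gL (1 - θ) < ⊤ ∧ gL 0 < gH 1)
    (sh sl dH dL bhH blH bhL blL : ℝ)
    (hsh : sh ∈ Icc (0:ℝ) 1) (hsl : sl ∈ Icc (0:ℝ) 1)
    (hdH : dH ∈ Icc (0:ℝ) 1) (hdL : dL ∈ Icc (0:ℝ) 1)
    (hbhH : bhH ∈ Icc (0:ℝ) 1) (hblH : blH = 1 - bhH)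
    (hbhL : bhL ∈ Icc (0:ℝ) 1) (hblL : blL = 1 - bhL)
    -- sequential rationality of type h agents (utilities valued in ℝ ∪ {-∞})
    (hr1 : 0 < sh →
      -gL (θ * sh + (1 - θ) * (1 - sl)) - (pth : EReal) - ((Fh * dL : ℝ) : EReal) ≥
        -gH (θ * (1 - sh) + (1 - θ) * sl))
    (hr2 : sh < 1 →
      -gL (θ * sh + (1 - θ) * (1 - sl)) - (pth : EReal) - ((Fh * dL : ℝ) : EReal) ≤
        -gH (θ * (1 - sh) + (1 - θ) * sl))
    -- sequential rationality of type l agents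
    (hr3 : 0 < sl →
      -gH (θ * (1 - sh) + (1 - θ) * sl) - (ptl : EReal) - ((Fl * dH : ℝ) : EReal) ≥
        -gL (θ * sh + (1 - θ) * (1 - sl)))
    (hr4 : sl < 1 →
      -gH (θ * (1 - sh) + (1 - θ) * sl) - (ptl : EReal) - ((Fl * dH : ℝ) : EReal) ≤
        -gL (θ * sh + (1 - θ) * (1 - sl)))
    -- operator optimality
    (hoH : ∀ x ∈ Icc (0:ℝ) 1, (-pd + Fl * blH) * x ≤ (-pd + Fl * blH) * dH)
    (hoL : ∀ x ∈ Icc (0:ℝ) 1, (-pd + Fh * bhL) * x ≤ (-pd + Fh * bhL) * dL)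
    -- consistency of beliefs
    (hcons1 : 0 < θ * (1 - sh) + (1 - θ) * sl →
      bhH = θ * (1 - sh) / (θ * (1 - sh) + (1 - θ) * sl))
    (hcons2 : 0 < θ * sh + (1 - θ) * (1 - sl) →
      bhL = θ * sh / (θ * sh + (1 - θ) * (1 - sl))) :
    gH (θ * (1 - sh) + (1 - θ) * sl) < ⊤ ∧
      gL (θ * sh + (1 - θ) * (1 - sl)) < ⊤ := by
  
  obtain ⟨hθ0, hθ1⟩ := hθ
  obtain ⟨hA1a, hA1b, _⟩ := hA1
  obtain ⟨hsh0, hsh1⟩ := hsh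
  obtain ⟨hsl0, hsl1⟩ := hsl
  set a := θ * (1 - sh) + (1 - θ) * sl with ha_def
  set b := θ * sh + (1 - θ) * (1 - sl) with hb_def
  have ha_mem : a ∈ Icc (0:ℝ) 1 := ⟨by nlinarith, by nlinarith⟩
  have hb_mem : b ∈ Icc (0:ℝ) 1 := ⟨by nlinarith, by nlinarith⟩
  have hθ_mem : θ ∈ Icc (0:ℝ) 1 := ⟨le_of_lt hθ0, le_of_lt hθ1⟩
  have h1θ_mem : (1 - θ) ∈ Icc (0:ℝ) 1 := ⟨by linarith, by linarith⟩
  have hab : a + b = 1 := by ring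
  -- first: gL b < ⊤
  have hLb : gL b < ⊤ := by
    rcases le_or_gt b (1 - θ) with hle | hlt
    · exact lt_of_le_of_lt (hgL hb_mem h1θ_mem hle) hA1b
    · -- then sh > 0
      have hshpos : 0 < sh := by nlinarith
      have h := hr1 hshpos
      by_contra htop
      rw [not_lt, top_le_iff] at htop
      rw [htop] at h
      simp only [EReal.neg_top, EReal.bot_sub, ge_iff_le, le_bot_iff] at h
      rw [EReal.neg_eq_bot_iff] at h
      have haθ : a ≤ θ := by nlinarith
      have : gH a ≤ gH θ := hgH ha_mem hθ_mem haθ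
      rw [h] at this
      rw [top_le_iff.mp this] at hA1a
      exact absurd (lt_trans hA1a hA1b) (by simp)
  refine ⟨?_, hLb⟩
  rcases le_or_gt a θ with hle | hlt
  · exact lt_of_le_of_lt (hgH ha_mem hθ_mem hle) (lt_trans hA1a hA1b)
  · have hslpos : 0 < sl := by nlinarith
    have h := hr3 hslpos
    by_contra htop
    rw [not_lt, top_le_iff] at htop
    rw [htop] at h
    simp only [EReal.neg_top, EReal.bot_sub, ge_iff_le, le_bot_iff] at h
    rw [EReal.neg_eq_bot_iff] at h
    rw [h] at hLb
    exact absurd hLb (by simp)
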